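/- For all nonnegative integers i, j and all integers k₁ ≤ k₂, Σ_{r=j}^{i} c(i,r,k₁)·b(r,j,k₂) = i! · binom(k₂-k₁, i-j), where the binomial coefficient binom(k₂-k₁, i-j) is 0 when i-j < 0 or i-j > k₂-k₁. -/

import Mathlib

open Finset

/-- Signed Stirling numbers of the first kind, defined as the coefficients of the
falling factorial polynomial `x*(x-1)*...*(x-i+1) = sum_{r=0}^{i} s(i,r)*x^r`. -/
noncomputable def s (i r : ℕ) : ℝ := (descPochhammer ℝ i).coeff r

/-- Moment generating Stirling numbers of the first kind (MSN1):
`c(i,j,k) = sum_{r=j}^{i} binom(r,j)*(-k)^(r-j)*s(i,r)` (and `0` if `j > i`). -/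
noncomputable def c (i j : ℕ) (k : ℝ) : ℝ :=
  ∑ r ∈ Finset.Icc j i, (r.choose j : ℝ) * (-k) ^ (r - j) * s i r

/-- Moment generating Stirling numbers of the second kind (MSN2):
`b(i,j,k) = sum_{r=0}^{j} binom(j,r)*(-1)^(j-r)*(r+k)^i`. -/
noncomputable def b (i j : ℕ) (k : ℝ) : ℝ :=
  ∑ r ∈ Finset.range (j + 1), (j.choose r : ℝ) * (-1 : ℝ) ^ (j - r) * ((r : ℝ) + k) ^ i

open scoped fwdDiff

lemma fwdDiff_iter_zero_fun (n : ℕ) : (fwdDiff (1:ℝ))^[n] (0 : ℝ → ℝ) = 0 := by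
  induction n with
  | zero => rfl
  | succ n ih =>
    rw [Function.iterate_succ_apply,
      show fwdDiff (1:ℝ) (0 : ℝ → ℝ) = 0 from funext fun x => sub_self _, ih]

lemma pow_fwdDiff_zero : ∀ r : ℕ, (fwdDiff (1:ℝ))^[r + 1] (fun x : ℝ => x ^ r) = 0 := by
  intro r
  induction r using Nat.strong_induction_on with
  | _ r ih =>
    rw [Function.iterate_succ_apply]
    have hΔ : fwdDiff (1:ℝ) (fun x : ℝ => x ^ r) =
        ∑ m ∈ Finset.range r, (r.choose m : ℝ) • (fun x : ℝ => x ^ m) := by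
      funext x
      have hx : (x + 1) ^ r = ∑ m ∈ Finset.range (r + 1), x ^ m * 1 ^ (r - m) * r.choose m :=
        add_pow x 1 r
      simp only [one_pow, mul_one] at hx
      rw [Finset.sum_range_succ, Nat.choose_self, Nat.cast_one, mul_one] at hx
      simp only [fwdDiff, hx, Finset.sum_apply, Pi.smul_apply, smul_eq_mul,
        add_sub_cancel_right]
      exact Finset.sum_congr rfl fun m _ => by ring
    rw [hΔ, fwdDiff_iter_finset_sum]
    refine Finset.sum_eq_zero fun m hm => ?_
    rw [fwdDiff_iter_const_smul]
    have hmr : m < r := Finset.mem_range.mp hm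
    have hsplit : r = (r - (m + 1)) + (m + 1) := by omega
    rw [hsplit, Function.iterate_add_apply, ih m hmr, fwdDiff_iter_zero_fun, smul_zero]

lemma b_eq_fwdDiff (i j : ℕ) (k : ℝ) : b i j k = (fwdDiff (1:ℝ))^[j] (fun x : ℝ => x ^ i) k := by
  rw [fwdDiff_iter_eq_sum_shift, b]
  refine Finset.sum_congr rfl fun t _ => ?_
  have : k + t • (1:ℝ) = (t : ℝ) + k := by
    rw [nsmul_eq_mul, mul_one]; ring
  rw [this, zsmul_eq_mul]
  push_cast
  ring

lemma b_eq_zero (i j : ℕ) (k : ℝ) (hij : i < j) : b i j k = 0 := by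
  rw [b_eq_fwdDiff]
  have hsplit : j = (j - (i + 1)) + (i + 1) := by omega
  rw [hsplit, Function.iterate_add_apply, pow_fwdDiff_zero, fwdDiff_iter_zero_fun]
  rfl

lemma c_gen (i : ℕ) (k x : ℝ) :
    ∑ r ∈ Finset.range (i + 1), c i r k * x ^ r = (descPochhammer ℝ i).eval (x - k) := by
  have h1 : (descPochhammer ℝ i).eval (x - k)
      = ∑ m ∈ Finset.range (i + 1), s i m * (x - k) ^ m := by
    rw [Polynomial.eval_eq_sum_range, descPochhammer_natDegree]
    rfl
  have h2 : ∀ m : ℕ, (x - k) ^ m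
      = ∑ t ∈ Finset.range (m + 1), x ^ t * (-k) ^ (m - t) * (m.choose t : ℝ) := by
    intro m; rw [sub_eq_add_neg, add_pow]
  rw [h1]
  simp_rw [h2, Finset.mul_sum]
  simp_rw [← Nat.Ico_zero_eq_range]
  rw [← Finset.sum_Ico_Ico_comm]
  refine Finset.sum_congr rfl fun t _ => ?_
  rw [Finset.Ico_add_one_right_eq_Icc, c, Finset.sum_mul]
  exact Finset.sum_congr rfl fun m _ => by ring

lemma fwdDiff_descPochhammer (n : ℕ) (k : ℝ) :
    fwdDiff (1:ℝ) (fun x : ℝ => (descPochhammer ℝ (n + 1)).eval (x - k)) =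
      fun x : ℝ => ((n : ℝ) + 1) * (descPochhammer ℝ n).eval (x - k) := by
  funext x
  have h1 : (descPochhammer ℝ (n + 1)).eval (x + 1 - k)
      = (x + 1 - k) * (descPochhammer ℝ n).eval (x - k) := by
    rw [descPochhammer_succ_left]
    simp only [Polynomial.eval_mul, Polynomial.eval_comp, Polynomial.eval_X,
      Polynomial.eval_sub, Polynomial.eval_one]
    ring_nf
  have h2 := descPochhammer_succ_eval n (x - k)
  simp only [fwdDiff, h1, h2]
  ring

lemma fwdDiff_iter_descPochhammer (i j : ℕ) (hj : j ≤ i) (k : ℝ) :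
    (fwdDiff (1:ℝ))^[j] (fun x : ℝ => (descPochhammer ℝ i).eval (x - k)) =
      fun x : ℝ => (i.descFactorial j : ℝ) * (descPochhammer ℝ (i - j)).eval (x - k) := by
  induction j with
  | zero => simp
  | succ j ih =>
    rw [Function.iterate_succ_apply', ih (Nat.le_of_succ_le hj)]
    have hform : (fun x : ℝ => (i.descFactorial j : ℝ) * (descPochhammer ℝ (i - j)).eval (x - k))
        = (i.descFactorial j : ℝ) • fun x : ℝ => (descPochhammer ℝ (i - j)).eval (x - k) := rfl
    rw [hform, fwdDiff_const_smul]
    have hij : i - j = (i - (j + 1)) + 1 := by omega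
    rw [hij, fwdDiff_descPochhammer]
    funext x
    simp only [Pi.smul_apply, smul_eq_mul]
    have hc : ((i - (j + 1) : ℕ) : ℝ) + 1 = ((i - j : ℕ) : ℝ) := by
      have : (i - (j + 1)) + 1 = i - j := by omega
      rw [← this]; push_cast; ring
    rw [hc, Nat.descFactorial_succ]
    push_cast
    ring

/-- For integers `k₁ ≤ k₂`,
`sum_{r=j}^{i} c(i,r,k₁)*b(r,j,k₂) = i! * binom(k₂-k₁, i-j)`,
where the binomial coefficient is `0` when `i - j < 0` or `i - j > k₂ - k₁`. -/
theorem msn1_msn2_product (i j : ℕ) (k₁ k₂ : ℤ) (h : k₁ ≤ k₂) :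
    ∑ r ∈ Finset.Icc j i, c i r (k₁ : ℝ) * b r j (k₂ : ℝ) =
      (Nat.factorial i : ℝ) *
        (if j ≤ i then (((k₂ - k₁).toNat.choose (i - j) : ℕ) : ℝ) else 0) := by
  by_cases hji : j ≤ i
  · rw [if_pos hji]
    have hsub : Finset.Icc j i ⊆ Finset.range (i + 1) := by
      intro r hr; simp only [Finset.mem_Icc] at hr; exact Finset.mem_range.mpr (by omega)
    have hext : ∑ r ∈ Finset.Icc j i, c i r (k₁ : ℝ) * b r j (k₂ : ℝ)
        = ∑ r ∈ Finset.range (i + 1), c i r (k₁ : ℝ) * b r j (k₂ : ℝ) := by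
      refine (Finset.sum_subset hsub fun r hr hr' => ?_)
      have : r < j := by
        simp only [Finset.mem_range] at hr
        simp only [Finset.mem_Icc, not_and, not_le] at hr'
        omega
      rw [b_eq_zero r j _ this, mul_zero]
    rw [hext]
    have key : ∑ r ∈ Finset.range (i + 1), c i r (k₁ : ℝ) * b r j (k₂ : ℝ)
        = (fwdDiff (1:ℝ))^[j] (fun x : ℝ => (descPochhammer ℝ i).eval (x - (k₁ : ℝ))) (k₂ : ℝ) := by
      have hfun : (fun x : ℝ => (descPochhammer ℝ i).eval (x - (k₁ : ℝ)))
          = ∑ r ∈ Finset.range (i + 1), c i r (k₁ : ℝ) • (fun x : ℝ => x ^ r) := by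
        funext x
        rw [Finset.sum_apply, ← c_gen i (k₁ : ℝ) x]
        exact Finset.sum_congr rfl fun r _ => rfl
      rw [hfun, fwdDiff_iter_finset_sum, Finset.sum_apply]
      refine Finset.sum_congr rfl fun r _ => ?_
      rw [fwdDiff_iter_const_smul, Pi.smul_apply, smul_eq_mul, b_eq_fwdDiff]
    rw [key, fwdDiff_iter_descPochhammer i j hji]
    have hd : (k₂ : ℝ) - (k₁ : ℝ) = (((k₂ - k₁).toNat : ℕ) : ℝ) := by
      have := Int.toNat_of_nonneg (sub_nonneg.mpr h)
      rw [show (((k₂ - k₁).toNat : ℕ) : ℝ) = (((k₂ - k₁).toNat : ℤ) : ℝ) by push_cast; ring, this]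
      push_cast; ring
    simp only [hd, descPochhammer_eval_eq_descFactorial]
    rw [← Nat.factorial_mul_descFactorial hji]
    simp only [Nat.descFactorial_eq_factorial_mul_choose]
    push_cast
    ring
  · rw [if_neg hji, Finset.Icc_eq_empty (by omega), Finset.sum_empty, mul_zero]
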